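/- Every 'white region' of the discrete Sierpinski triangle is finite and surrounded by points of S_△: for every point p ∈ (ℕ×ℕ) \ S_△, the set of points q ∈ (ℕ×ℕ) \ S_△ reachable from p by a finite sequence of 4-adjacent steps all of which stay inside (ℕ×ℕ) \ S_△ is a finite set. -/

import Mathlib

/-- The `i`-th stage of the discrete Sierpinski triangle:
`S_0 = {(0,0)}`, `S_{i+1} = S_i ∪ (S_i + 2^i·V)` with `V = {(1,0),(0,1)}`. -/
def sierpStage : ℕ → Set (ℕ × ℕ)
  | 0 => {(0, 0)}
  | i + 1 => sierpStage i ∪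
      {p | ∃ m ∈ sierpStage i, ∃ n ∈ ({(1, 0), (0, 1)} : Set (ℕ × ℕ)), p = m + (2 ^ i) • n}

/-- The discrete Sierpinski triangle `S_△ = ⋃ i, S_i`. -/
def sierpinski : Set (ℕ × ℕ) := ⋃ i, sierpStage i

/-- Two points of `ℕ × ℕ` are 4-adjacent if they differ by exactly `1` in
exactly one coordinate. -/
def FourAdj (p q : ℕ × ℕ) : Prop :=
  (p.1 = q.1 ∧ (p.2 + 1 = q.2 ∨ q.2 + 1 = p.2)) ∨
  (p.2 = q.2 ∧ (p.1 + 1 = q.1 ∨ q.1 + 1 = p.1))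

/-- One 4-adjacent step staying inside the complement of `S_△`. -/
def OutsideStep (p q : ℕ × ℕ) : Prop :=
  FourAdj p q ∧ p ∉ sierpinski ∧ q ∉ sierpinski

/-- The whole anti-diagonal `x + y = 2^n - 1` is contained in stage `n`. -/
lemma diag_mem_sierpStage : ∀ n x y : ℕ, x + y = 2 ^ n - 1 → (x, y) ∈ sierpStage n := by
  intro n
  induction n with
  | zero =>
    intro x y h
    simp only [pow_zero] at h
    have hx : x = 0 := by omega
    have hy : y = 0 := by omega
    subst hx; subst hy
    simp [sierpStage]
  | succ n ih =>
    intro x y h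
    have hpow : 1 ≤ 2 ^ n := Nat.one_le_two_pow
    have hsum : x + y = 2 * 2 ^ n - 1 := by
      rw [h, pow_succ]; ring_nf
    rcases le_or_gt (2 ^ n) x with hx | hx
    · have hm : (x - 2 ^ n, y) ∈ sierpStage n := ih _ _ (by omega)
      refine Or.inr ⟨(x - 2 ^ n, y), hm, (1, 0), Or.inl rfl, ?_⟩
      have : (x - 2 ^ n, y) + (2 ^ n) • ((1, 0) : ℕ × ℕ) = (x - 2 ^ n + 2 ^ n * 1, y + 2 ^ n * 0) := by
        rfl
      rw [this]
      ext <;> simp <;> omega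
    · have hy : 2 ^ n ≤ y := by omega
      have hm : (x, y - 2 ^ n) ∈ sierpStage n := ih _ _ (by omega)
      refine Or.inr ⟨(x, y - 2 ^ n), hm, (0, 1), Or.inr rfl, ?_⟩
      have : (x, y - 2 ^ n) + (2 ^ n) • ((0, 1) : ℕ × ℕ) = (x + 2 ^ n * 0, y - 2 ^ n + 2 ^ n * 1) := by
        rfl
      rw [this]
      ext <;> simp <;> omega

lemma diag_mem_sierpinski {x y n : ℕ} (h : x + y = 2 ^ n - 1) : (x, y) ∈ sierpinski :=
  Set.mem_iUnion.2 ⟨n, diag_mem_sierpStage n x y h⟩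

/-- Every white region of the discrete Sierpinski triangle is finite: the set
of points of the complement of `S_△` reachable from a given point `p` of the
complement by 4-adjacent steps staying in the complement is finite. -/
theorem sierpinski_white_regions_finite (p : ℕ × ℕ) (hp : p ∉ sierpinski) :
    {q : ℕ × ℕ | Relation.ReflTransGen OutsideStep p q}.Finite := by
  set n := p.1 + p.2 + 2 with hn_def
  have hn : p.1 + p.2 < 2 ^ n - 1 := by
    have h1 : n < 2 ^ n := Nat.lt_two_pow_self
    omega
  have key : ∀ q, Relation.ReflTransGen OutsideStep p q → q.1 + q.2 < 2 ^ n - 1 := by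
    intro q h
    induction h with
    | refl => exact hn
    | @tail b c h1 h2 ih =>
      obtain ⟨hadj, _, hnot⟩ := h2
      have hne : c.1 + c.2 ≠ 2 ^ n - 1 := by
        intro he
        exact hnot (by simpa using diag_mem_sierpinski (x := c.1) (y := c.2) he)
      rcases hadj with ⟨h₁, h₂⟩ | ⟨h₁, h₂⟩ <;> omega
  apply (Set.finite_Iic ((2 ^ n, 2 ^ n) : ℕ × ℕ)).subset
  intro q hq
  have := key q hq
  simp only [Set.mem_Iic, Prod.le_def]
  omega
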